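/- arXiv:0805.1875 — 3 statements merged into one kernel-verified Lean document; each statement's English description precedes it below -/
import Mathlib

section
/- Let G be a finite tree (a finite connected acyclic simple graph), let B be a subset of its vertex set, and let N assign to each vertex a positive integer such that for every vertex v not in B, N(v) divides the sum of N(w) over all vertices w adjacent to v. Let v₀, v₁, …, v_r be a path in G such that v₀ is a leaf (degree 1) with v₀ ∉ B, and such that every intermediate vertex v_j with 1 ≤ j ≤ r−1 has degree 2 in G and satisfies v_j ∉ B. Then N(v₀) divides N(v_j) for every j with 0 ≤ j ≤ r. -/
private lemma nbhd_eq_pair {V : Type*} [Fintype V] [DecidableEq V] (G : SimpleGraph V) [DecidableRel G.Adj]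
    {a p c : V} (hdeg : G.degree a = 2) (hp : G.Adj a p) (hc : G.Adj a c) (hpc : p ≠ c) :
    G.neighborFinset a = {p, c} := by
  symm
  apply Finset.eq_of_subset_of_card_le
  · intro x hx
    simp only [Finset.mem_insert, Finset.mem_singleton] at hx
    rcases hx with rfl | rfl <;> simp [SimpleGraph.mem_neighborFinset, hp, hc]
  · rw [SimpleGraph.card_neighborFinset_eq_degree, hdeg, Finset.card_insert_of_notMem (by simpa using hpc), Finset.card_singleton]

private lemma nbhd_eq_single {V : Type*} [Fintype V] (G : SimpleGraph V) [DecidableRel G.Adj]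
    {a c : V} (hdeg : G.degree a = 1) (hc : G.Adj a c) :
    G.neighborFinset a = {c} := by
  symm
  apply Finset.eq_of_subset_of_card_le
  · intro x hx
    simp only [Finset.mem_singleton] at hx
    subst hx; simpa [SimpleGraph.mem_neighborFinset] using hc
  · rw [SimpleGraph.card_neighborFinset_eq_degree, hdeg, Finset.card_singleton]

private lemma aux_walk {V : Type*} [Fintype V] (G : SimpleGraph V) [DecidableRel G.Adj]
    (B : Set V) (N : V → ℕ)
    (hcong : ∀ v ∉ B, N v ∣ ∑ w ∈ G.neighborFinset v, N w) (d : ℕ) :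
    ∀ {a b : V} (w : G.Walk a b), w.IsPath →
      ∀ p, G.Adj p a → p ∉ w.support → d ∣ N p → d ∣ N a →
      (∀ x ∈ w.support, x ≠ b → G.degree x = 2 ∧ x ∉ B) →
      ∀ x ∈ w.support, d ∣ N x := by
  haveI := Classical.decEq V
  intro a b w
  induction w with
  | nil =>
    intro _ p _ _ _ hda _ x hx
    simp only [SimpleGraph.Walk.support_nil, List.mem_singleton] at hx
    subst hx; exact hda
  | @cons a c b h w' ih =>
    intro hpath p hpa hpns hdp hda hmid x hx
    have hpath' : w'.IsPath := hpath.of_cons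
    have hans : a ∉ w'.support := (SimpleGraph.Walk.cons_isPath_iff h w').mp hpath |>.2
    have hab : a ≠ b := fun h' => hans (h' ▸ w'.end_mem_support)
    have ha2 : G.degree a = 2 ∧ a ∉ B := hmid a (by simp) hab
    have hpc : p ≠ c := by
      intro h'; subst h'
      exact hpns (by simp [SimpleGraph.Walk.support_cons, SimpleGraph.Walk.start_mem_support])
    have hnb : G.neighborFinset a = {p, c} := nbhd_eq_pair G ha2.1 hpa.symm h hpc
    have hsum : N a ∣ N p + N c := by
      have := hcong a ha2.2
      rwa [hnb, Finset.sum_pair hpc] at this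
    have hdc : d ∣ N c := by
      have hdsum : d ∣ N p + N c := hda.trans hsum
      exact (Nat.dvd_add_right hdp).mp hdsum
    simp only [SimpleGraph.Walk.support_cons, List.mem_cons] at hx
    rcases hx with rfl | hx
    · exact hda
    · exact ih hpath' a h hans hda hdc
        (fun y hy hyb => hmid y (by simp [SimpleGraph.Walk.support_cons, hy]) hyb) x hx

/-- Let `G` be a finite tree, `B` a set of vertices, and `N` a positive-integer weight
on the vertices such that every vertex outside `B` satisfies Loeser's congruence:
its weight divides the sum of the weights of its neighbours. If `v₀, …, v_r` is a
path (a walk with pairwise distinct vertices) whose starting vertex `v₀` is a leaf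
not in `B` and all of whose intermediate vertices have degree `2` and lie outside `B`,
then `N v₀` divides the weight of every vertex of the path. -/
theorem tree_path_first_weight_dvd {V : Type*} [Fintype V]
    (G : SimpleGraph V) [DecidableRel G.Adj] (hT : G.IsTree)
    (B : Set V) (N : V → ℕ) (hpos : ∀ v, 0 < N v)
    (hcong : ∀ v ∉ B, N v ∣ ∑ w ∈ G.neighborFinset v, N w)
    (v₀ u : V) (w : G.Walk v₀ u) (hw : w.IsPath)
    (hleaf : G.degree v₀ = 1) (hv₀B : v₀ ∉ B)
    (hmid : ∀ x ∈ w.support, x ≠ v₀ → x ≠ u → G.degree x = 2 ∧ x ∉ B) :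
    ∀ x ∈ w.support, N v₀ ∣ N x := by
  cases w with
  | nil =>
    intro x hx
    simp only [SimpleGraph.Walk.support_nil, List.mem_singleton] at hx
    subst hx; exact dvd_refl _
  | @cons _ c _ h w' =>
    have hpath' : w'.IsPath := hw.of_cons
    have hv₀ns : v₀ ∉ w'.support := (SimpleGraph.Walk.cons_isPath_iff h w').mp hw |>.2
    have hnb : G.neighborFinset v₀ = {c} := nbhd_eq_single G hleaf h
    have hdc : N v₀ ∣ N c := by
      have := hcong v₀ hv₀B
      rwa [hnb, Finset.sum_singleton] at this
    intro x hx
    simp only [SimpleGraph.Walk.support_cons, List.mem_cons] at hx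
    rcases hx with rfl | hx
    · exact dvd_refl _
    · refine aux_walk G B N hcong (N v₀) w' hpath' v₀ h hv₀ns (dvd_refl _) hdc ?_ x hx
      intro y hy hyu
      exact hmid y (by simp [SimpleGraph.Walk.support_cons, hy])
        (fun h' => hv₀ns (h' ▸ hy)) hyu
end

section
/- Let G be a finite tree (a finite connected acyclic simple graph), let B be a subset of its vertex set, and let N assign to each vertex a positive integer such that for every vertex v not in B, N(v) divides the sum of N(w) over all vertices w adjacent to v. Let d ≥ 1 and suppose u and v are adjacent vertices with d ∣ N(u) and d ∣ N(v). Then there exists a vertex w of G with d ∣ N(w) such that w ∈ B or the degree of w in G is different from 2. -/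
section Aux

variable {V : Type*} {G : SimpleGraph V}

/-- On a shortest walk, any support vertex splits the distance. -/
lemma dist_split_of_mem_support [DecidableEq V] {u c x : V} (p : G.Walk u c)
    (hp : p.length = G.dist u c) (hx : x ∈ p.support) :
    G.dist u x + G.dist x c ≤ G.dist u c := by
  have hspec := p.take_spec hx
  have hlen : (p.takeUntil x hx).length + (p.dropUntil x hx).length = p.length := by
    have := congrArg SimpleGraph.Walk.length hspec
    rwa [SimpleGraph.Walk.length_append] at this
  calc G.dist u x + G.dist x c
      ≤ (p.takeUntil x hx).length + (p.dropUntil x hx).length :=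
        Nat.add_le_add (SimpleGraph.dist_le _) (SimpleGraph.dist_le _)
    _ = G.dist u c := by rw [hlen, hp]

lemma isPath_concat {a b c : V} {p : G.Walk a b} (hp : p.IsPath) (h : G.Adj b c)
    (hc : c ∉ p.support) : (p.concat h).IsPath := by
  rw [← SimpleGraph.Walk.isPath_reverse_iff, SimpleGraph.Walk.reverse_concat]
  exact hp.reverse.cons (by simpa [SimpleGraph.Walk.support_reverse] using hc)

/-- Key step: in a tree, if `b` is one step farther from `u` than its neighbour `a`,
then any other neighbour `c` of `b` is one step farther than `b`. -/
lemma tree_dist_step (hT : G.IsTree) {u a b c : V} (hab : G.Adj a b) (hbc : G.Adj b c)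
    (hca : c ≠ a) (hd : G.dist u a + 1 = G.dist u b) :
    G.dist u c = G.dist u b + 1 := by
  classical
  have hconn := hT.isConnected
  have hle : G.dist u c ≤ G.dist u b + 1 := by
    obtain ⟨p, hp⟩ := hconn.exists_walk_length_eq_dist u b
    have := SimpleGraph.dist_le (p.concat hbc)
    simpa [hp] using this
  have hgt : G.dist u b < G.dist u c := by
    by_contra hne
    push_neg at hne
    -- build two distinct paths from u to b
    obtain ⟨p, hp⟩ := hconn.exists_walk_length_eq_dist u c
    obtain ⟨q, hq⟩ := hconn.exists_walk_length_eq_dist u a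
    have hpb : b ∉ p.support := by
      intro hb
      have h1 := dist_split_of_mem_support p hp hb
      have h2 : 0 < G.dist b c := hconn.pos_dist_of_ne hbc.ne
      omega
    have hqb : b ∉ q.support := by
      intro hb
      have h1 := dist_split_of_mem_support q hq hb
      omega
    have hppath : p.IsPath := p.isPath_of_length_eq_dist hp
    have hqpath : q.IsPath := q.isPath_of_length_eq_dist hq
    have hW1 : (p.concat hbc.symm).IsPath := isPath_concat hppath hbc.symm hpb
    have hW2 : (q.concat hab).IsPath := isPath_concat hqpath hab hqb
    have heq : (⟨p.concat hbc.symm, hW1⟩ : G.Path u b) = ⟨q.concat hab, hW2⟩ :=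
      hT.IsAcyclic.path_unique _ _
    have heq' : (p.concat hbc.symm).reverse = (q.concat hab).reverse := by
      have := congrArg (fun r : G.Path u b => (r : G.Walk u b).reverse) heq
      simpa using this
    rw [SimpleGraph.Walk.reverse_concat, SimpleGraph.Walk.reverse_concat] at heq'
    have := congrArg (fun w : G.Walk b u => w.getVert 1) heq'
    simp only [SimpleGraph.Walk.getVert_cons_succ, SimpleGraph.Walk.getVert_zero] at this
    exact hca this
  omega

end Aux

/-- Let `G` be a finite tree, `B` a set of vertices, and `N` a positive-integer weight
on the vertices such that every vertex outside `B` satisfies Loeser's congruence: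
its weight divides the sum of the weights of its neighbours. If `d ≥ 1` divides the
weights of two adjacent vertices, then there is a vertex `w` with `d ∣ N w` such that
`w ∈ B` or the degree of `w` is different from `2`. -/
theorem tree_dvd_adjacent_reaches_special {V : Type*} [Fintype V]
    (G : SimpleGraph V) [DecidableRel G.Adj] (hT : G.IsTree)
    (B : Set V) (N : V → ℕ) (hpos : ∀ v, 0 < N v)
    (hcong : ∀ v ∉ B, N v ∣ ∑ w ∈ G.neighborFinset v, N w)
    (d : ℕ) (hd : 1 ≤ d) (u v : V) (huv : G.Adj u v)
    (hdu : d ∣ N u) (hdv : d ∣ N v) :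
    ∃ w : V, d ∣ N w ∧ (w ∈ B ∨ G.degree w ≠ 2) := by
  classical
  by_contra hcon
  push_neg at hcon
  -- every vertex with d ∣ N w is outside B and has degree 2
  have Hcon : ∀ w : V, d ∣ N w → w ∉ B ∧ G.degree w = 2 := fun w hw => hcon w hw
  have hconn := hT.isConnected
  -- the "next vertex" function: the neighbour of b other than a
  let other : V → V → V := fun a b =>
    if h : ((G.neighborFinset b).erase a).Nonempty then h.choose else a
  -- main step lemma
  have step : ∀ a b : V, G.Adj a b → d ∣ N a → d ∣ N b →
      G.Adj b (other a b) ∧ other a b ≠ a ∧ d ∣ N (other a b) := by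
    intro a b hab hda hdb
    obtain ⟨hbB, hbdeg⟩ := Hcon b hdb
    have ha : a ∈ G.neighborFinset b := by
      rw [SimpleGraph.mem_neighborFinset]; exact hab.symm
    have hcard : (G.neighborFinset b).card = 2 := hbdeg
    have hne : ((G.neighborFinset b).erase a).Nonempty := by
      rw [← Finset.card_pos, Finset.card_erase_of_mem ha, hcard]
      norm_num
    set c := other a b with hc
    have hcmem : c ∈ (G.neighborFinset b).erase a := by
      rw [hc]; simp only [other, dif_pos hne]; exact hne.choose_spec
    have hcne : c ≠ a := Finset.ne_of_mem_erase hcmem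
    have hcadj : G.Adj b c := by
      rw [← SimpleGraph.mem_neighborFinset]
      exact Finset.mem_of_mem_erase hcmem
    -- neighborFinset b = {a, c}
    have hsub : ({a, c} : Finset V) ⊆ G.neighborFinset b := by
      intro x hx
      rcases Finset.mem_insert.mp hx with h | h
      · rwa [h]
      · rw [Finset.mem_singleton.mp h, ← SimpleGraph.mem_neighborFinset] at *
        exact hcadj
    have hcard2 : ({a, c} : Finset V).card = 2 := by
      rw [Finset.card_insert_of_notMem (by simpa using hcne.symm), Finset.card_singleton]
    have hset : G.neighborFinset b = {a, c} :=
      (Finset.eq_of_subset_of_card_le hsub (by rw [hcard, hcard2])).symm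
    have hsum : ∑ w ∈ G.neighborFinset b, N w = N a + N c := by
      rw [hset, Finset.sum_pair hcne.symm]
    have hdvd : d ∣ N a + N c := dvd_trans hdb (hsum ▸ hcong b hbB)
    exact ⟨hcadj, hcne, (Nat.dvd_add_right hda).mp hdvd⟩
  -- build the infinite walk
  let g : ℕ → V × V := fun n => Nat.rec (u, v) (fun _ p => (p.2, other p.1 p.2)) n
  have hg0 : g 0 = (u, v) := rfl
  have hgsucc : ∀ n, g (n + 1) = ((g n).2, other (g n).1 (g n).2) := fun n => rfl
  have inv : ∀ n, d ∣ N (g n).1 ∧ d ∣ N (g n).2 ∧ G.Adj (g n).1 (g n).2 ∧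
      G.dist u (g n).1 + 1 = G.dist u (g n).2 ∧ G.dist u (g n).1 = n := by
    intro n
    induction n with
    | zero =>
      refine ⟨hdu, hdv, huv, ?_, ?_⟩
      · have h1 : G.dist u v ≤ 1 := by
          have := SimpleGraph.dist_le (SimpleGraph.Walk.cons huv SimpleGraph.Walk.nil)
          simpa using this
        have h2 : 0 < G.dist u v := hconn.pos_dist_of_ne huv.ne
        have h0 : G.dist u u = 0 := SimpleGraph.dist_self
        simp only [hg0]
        omega
      · simp [hg0, SimpleGraph.dist_self]
    | succ n ih =>
      obtain ⟨h1, h2, h3, h4, h5⟩ := ih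
      obtain ⟨hadj, hne, hdc⟩ := step (g n).1 (g n).2 h3 h1 h2
      have hdist := tree_dist_step hT h3 hadj hne h4
      have e1 : (g (n+1)).1 = (g n).2 := rfl
      have e2 : (g (n+1)).2 = other (g n).1 (g n).2 := rfl
      rw [e1, e2]
      exact ⟨h2, hdc, hadj, hdist.symm, by omega⟩
  -- injectivity contradiction
  have hinj : Function.Injective (fun n => (g n).1) := by
    intro m n hmn
    have hm := (inv m).2.2.2.2
    have hn := (inv n).2.2.2.2
    simp only at hmn
    rw [hmn] at hm
    omega
  exact (Finite.exists_ne_map_eq_of_infinite (fun n => (g n).1)).elim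
    (fun x hx => hx.choose_spec.elim (fun h1 h2 => hx.choose_spec.1 (hinj hx.choose_spec.2)))
end

section
/- Let G be a finite tree (a finite connected acyclic simple graph) having at least one vertex of degree ≥ 3, let B be a subset of its vertex set, and let N assign to each vertex a positive integer such that for every vertex v not in B, N(v) divides the sum of N(w) over all vertices w adjacent to v. Let d ≥ 1 and assume that d does not divide N(w) for any vertex w ∈ B and does not divide N(w) for any vertex w of degree ≥ 3. Then: (1) every vertex v with d ∣ N(v) has degree exactly 2 in G and lies outside B; and (2) no two adjacent vertices u, v satisfy both d ∣ N(u) and d ∣ N(v). -/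
/-- Combinatorial core of the holomorphy conjecture for ideals in `ℂ[x,y]`:
let `G` be a finite tree having a vertex of degree `≥ 3`, `B` a set of vertices, and
`N` a positive-integer weight on the vertices such that every vertex outside `B`
satisfies Loeser's congruence (its weight divides the sum of the weights of its
neighbours). If `d ≥ 1` divides neither the weight of any vertex of `B` nor the
weight of any vertex of degree `≥ 3`, then every vertex whose weight is divisible
by `d` has degree exactly `2` and lies outside `B`, and no two adjacent vertices
both have weight divisible by `d`. -/
theorem tree_dvd_weights_deg_two_nonadjacent {V : Type*} [Fintype V]
    (G : SimpleGraph V) [DecidableRel G.Adj] (hT : G.IsTree)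
    (hbranch : ∃ v, 3 ≤ G.degree v)
    (B : Set V) (N : V → ℕ) (hpos : ∀ v, 0 < N v)
    (hcong : ∀ v ∉ B, N v ∣ ∑ w ∈ G.neighborFinset v, N w)
    (d : ℕ) (hd : 1 ≤ d)
    (hB : ∀ w ∈ B, ¬ d ∣ N w)
    (hdeg : ∀ w : V, 3 ≤ G.degree w → ¬ d ∣ N w) :
    (∀ v : V, d ∣ N v → G.degree v = 2 ∧ v ∉ B) ∧
      (∀ u v : V, G.Adj u v → ¬ (d ∣ N u ∧ d ∣ N v)) := by
  classical
  obtain ⟨b, hb⟩ := hbranch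
  -- Basic facts about vertices with `d ∣ N v`.
  have hnotB : ∀ v : V, d ∣ N v → v ∉ B := by
    intro v hv hvB; exact hB v hvB hv
  have hdegle : ∀ v : V, d ∣ N v → G.degree v ≤ 2 := by
    intro v hv
    by_contra h
    exact hdeg v (by omega) hv
  -- Property that propagates along the tree.
  set P : V → Prop := fun x => d ∣ N x ∧ ∃ y, G.Adj x y ∧ d ∣ N y with hP
  have step : ∀ x z : V, P x → G.Adj x z → P z := by
    intro x z ⟨hx, y, hxy, hy⟩ hxz
    have hz : d ∣ N z := by
      by_cases hzy : z = y
      · exact hzy ▸ hy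
      · -- x has two distinct neighbours y and z, and degree ≤ 2.
        have hyx : y ∈ G.neighborFinset x := (SimpleGraph.mem_neighborFinset G x y).2 hxy
        have hzx : z ∈ G.neighborFinset x := (SimpleGraph.mem_neighborFinset G x z).2 hxz
        have hsub : ({y, z} : Finset V) ⊆ G.neighborFinset x := by
          intro a ha
          rcases Finset.mem_insert.1 ha with rfl | ha
          · exact hyx
          · exact (Finset.mem_singleton.1 ha) ▸ hzx
        have hcard : ({y, z} : Finset V).card = 2 := by
          rw [Finset.card_insert_of_notMem (by simpa using fun h => hzy h.symm),
            Finset.card_singleton]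
        have heq : G.neighborFinset x = {y, z} := by
          symm
          apply Finset.eq_of_subset_of_card_le hsub
          rw [hcard]
          exact hdegle x hx
        have hsum : d ∣ ∑ w ∈ G.neighborFinset x, N w :=
          dvd_trans hx (hcong x (hnotB x hx))
        rw [heq, Finset.sum_pair (fun h => hzy h.symm)] at hsum
        exact (Nat.dvd_add_right hy).1 hsum
    exact ⟨hz, x, hxz.symm, hx⟩
  have prop : ∀ {a c : V}, G.Walk a c → P a → P c := by
    intro a c w
    induction w with
    | nil => exact id
    | cons h p ih => exact fun ha => ih (step _ _ ha h)
  -- Any adjacent divisible pair leads to a contradiction.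
  have key : ∀ u v : V, G.Adj u v → d ∣ N u → d ∣ N v → False := by
    intro u v huv hu hv
    have hPu : P u := ⟨hu, v, huv, hv⟩
    obtain ⟨w⟩ := hT.isConnected.preconnected u b
    exact hdeg b hb (prop w hPu).1
  refine ⟨?_, fun u v huv ⟨hu, hv⟩ => key u v huv hu hv⟩
  intro v hv
  refine ⟨?_, hnotB v hv⟩
  have hle := hdegle v hv
  have hsum : d ∣ ∑ w ∈ G.neighborFinset v, N w :=
    dvd_trans hv (hcong v (hnotB v hv))
  -- degree ≠ 0
  have hne0 : G.degree v ≠ 0 := by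
    intro h0
    have hvb : v ≠ b := by
      intro h; rw [h] at h0; omega
    obtain ⟨w⟩ := hT.isConnected.preconnected v b
    cases w with
    | nil => exact hvb rfl
    | cons h p =>
      have : _ ∈ G.neighborFinset v := (SimpleGraph.mem_neighborFinset G v _).2 h
      rw [SimpleGraph.degree, Finset.card_eq_zero] at h0
      simp [h0] at this
  -- degree ≠ 1
  have hne1 : G.degree v ≠ 1 := by
    intro h1
    rw [SimpleGraph.degree, Finset.card_eq_one] at h1
    obtain ⟨w, hw⟩ := h1
    have hadj : G.Adj v w := (SimpleGraph.mem_neighborFinset G v w).1 (by simp [hw])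
    rw [hw, Finset.sum_singleton] at hsum
    exact key v w hadj hv hsum
  omega
end
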